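/- Let n be a positive integer and let ρ and σ be n×n positive definite complex matrices with trace 1. For every n×n unitary matrix U one has Tr(ρ² (U*σU)⁻¹) ≤ Σ_{i=1}^n λ↓ᵢ(ρ)² / λ↑ᵢ(σ), and equality holds for U = W↑ V↓*. Consequently the maximum of U ↦ Tr(ρ² (U*σU)⁻¹) over the unitary group is Σ_{i=1}^n λ↓ᵢ(ρ)² / λ↑ᵢ(σ) and it is attained at W↑ V↓*. -/

import Mathlib

open Matrix
open scoped ComplexOrder

lemma ds_sum_le {n : ℕ} (a b : Fin n → ℝ) (hab : Monovary a b)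
    {D : Matrix (Fin n) (Fin n) ℝ} (hD : D ∈ doublyStochastic ℝ (Fin n)) :
    ∑ i, ∑ j, a i * b j * D i j ≤ ∑ i, a i * b i := by
  obtain ⟨w, hw0, hw1, hwD⟩ := exists_eq_sum_perm_of_mem_doublyStochastic hD
  have hperm : ∀ (σ : Equiv.Perm (Fin n)) (i : Fin n),
      ∑ j, a i * b j * (σ.permMatrix ℝ i j) = a i * b (σ i) := by
    intro σ i
    simp [Equiv.Perm.permMatrix, PEquiv.toMatrix_apply, Equiv.toPEquiv_apply,
      mul_ite, Finset.sum_ite_eq]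
  calc ∑ i, ∑ j, a i * b j * D i j
      = ∑ i, ∑ σ : Equiv.Perm (Fin n), ∑ j, w σ * (a i * b j * σ.permMatrix ℝ i j) := by
        refine Finset.sum_congr rfl fun i _ => ?_
        rw [Finset.sum_comm]
        refine Finset.sum_congr rfl fun j _ => ?_
        rw [← hwD, Matrix.sum_apply, Finset.mul_sum]
        refine Finset.sum_congr rfl fun σ _ => ?_
        simp only [Matrix.smul_apply, smul_eq_mul]
        ring
    _ = ∑ σ : Equiv.Perm (Fin n), w σ * ∑ i, a i * b (σ i) := by
        rw [Finset.sum_comm]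
        refine Finset.sum_congr rfl fun σ _ => ?_
        simp_rw [← Finset.mul_sum, hperm]
    _ ≤ ∑ σ : Equiv.Perm (Fin n), w σ * ∑ i, a i * b i := by
        refine Finset.sum_le_sum fun σ _ => ?_
        exact mul_le_mul_of_nonneg_left hab.sum_mul_comp_perm_le_sum_mul (hw0 σ)
    _ = ∑ i, a i * b i := by rw [← Finset.sum_mul, hw1, one_mul]

lemma trace_conj_le {n : ℕ} (a b : Fin n → ℝ) (hab : Monovary a b)
    {M : Matrix (Fin n) (Fin n) ℂ} (hM1 : M * Mᴴ = 1) (hM2 : Mᴴ * M = 1) :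
    ((Matrix.diagonal (fun i => (a i : ℂ)) * M * Matrix.diagonal (fun i => (b i : ℂ)) * Mᴴ).trace).re
      ≤ ∑ i, a i * b i := by
  set D : Matrix (Fin n) (Fin n) ℝ := Matrix.of fun i j => Complex.normSq (M i j) with hDdef
  have htr : ((Matrix.diagonal (fun i => (a i : ℂ)) * M * Matrix.diagonal (fun i => (b i : ℂ)) * Mᴴ).trace).re
      = ∑ i, ∑ j, a i * b j * D i j := by
    have : (Matrix.diagonal (fun i => (a i : ℂ)) * M * Matrix.diagonal (fun i => (b i : ℂ)) * Mᴴ).trace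
        = ∑ i, ∑ j, ((a i * b j * D i j : ℝ) : ℂ) := by
      rw [Matrix.trace]
      refine Finset.sum_congr rfl fun i _ => ?_
      rw [Matrix.diag_apply, Matrix.mul_apply]
      refine Finset.sum_congr rfl fun j _ => ?_
      have h1 : (Matrix.diagonal (fun i => (a i : ℂ)) * M * Matrix.diagonal (fun i => (b i : ℂ))) i j
          = (a i : ℂ) * M i j * (b j : ℂ) := by
        rw [Matrix.mul_diagonal, Matrix.diagonal_mul]
      rw [h1, Matrix.conjTranspose_apply]
      have h2 : M i j * star (M i j) = (Complex.normSq (M i j) : ℂ) := by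
        rw [Complex.star_def, Complex.mul_conj]
      push_cast
      rw [hDdef]
      simp only [Matrix.of_apply]
      calc (a i : ℂ) * M i j * (b j : ℂ) * star (M i j)
          = (a i : ℂ) * (b j : ℂ) * (M i j * star (M i j)) := by ring
        _ = (a i : ℂ) * (b j : ℂ) * (Complex.normSq (M i j) : ℂ) := by rw [h2]
    rw [this]
    push_cast
    simp [Complex.re_sum]
  have hD : D ∈ doublyStochastic ℝ (Fin n) := by
    rw [mem_doublyStochastic_iff_sum]
    refine ⟨fun i j => Complex.normSq_nonneg _, fun i => ?_, fun j => ?_⟩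
    · have := congrFun (congrFun hM1 i) i
      rw [Matrix.mul_apply, Matrix.one_apply_eq] at this
      have : (∑ j, M i j * Mᴴ j i).re = 1 := by rw [this]; simp
      rw [Complex.re_sum] at this
      rw [← this]
      refine Finset.sum_congr rfl fun j _ => ?_
      rw [Matrix.conjTranspose_apply, Complex.star_def, Complex.mul_conj]
      simp [hDdef]
    · have := congrFun (congrFun hM2 j) j
      rw [Matrix.mul_apply, Matrix.one_apply_eq] at this
      have : (∑ i, Mᴴ j i * M i j).re = 1 := by rw [this]; simp
      rw [Complex.re_sum] at this
      rw [← this]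
      refine Finset.sum_congr rfl fun i _ => ?_
      rw [Matrix.conjTranspose_apply, Complex.star_def, mul_comm, Complex.mul_conj]
      simp [hDdef]
  rw [htr]
  exact ds_sum_le a b hab hD

lemma posdef_conj {n : ℕ} {A B : Matrix (Fin n) (Fin n) ℂ} (hA : A.PosDef)
    (hB2 : Bᴴ * B = 1) : (Bᴴ * A * B).PosDef := by
  refine Matrix.PosDef.of_dotProduct_mulVec_pos ?_ ?_
  · have : (Bᴴ * A * B)ᴴ = Bᴴ * Aᴴ * B := by
      rw [Matrix.conjTranspose_mul, Matrix.conjTranspose_mul, Matrix.conjTranspose_conjTranspose,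
        Matrix.mul_assoc]
    rw [Matrix.IsHermitian, this, hA.isHermitian.eq]
  · intro x hx
    have hBx : B *ᵥ x ≠ 0 := by
      intro h
      apply hx
      have : Bᴴ *ᵥ (B *ᵥ x) = x := by rw [Matrix.mulVec_mulVec, hB2, Matrix.one_mulVec]
      rw [h, Matrix.mulVec_zero] at this
      exact this.symm
    have key : star x ⬝ᵥ ((Bᴴ * A * B) *ᵥ x) = star (B *ᵥ x) ⬝ᵥ (A *ᵥ (B *ᵥ x)) := by
      rw [← Matrix.mulVec_mulVec, ← Matrix.mulVec_mulVec, Matrix.dotProduct_mulVec, star_mulVec]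
    rw [key]
    exact hA.dotProduct_mulVec_pos hBx

theorem stmt1 (n : ℕ) (hn : 0 < n)
    (ρ σ : Matrix (Fin n) (Fin n) ℂ)
    (hρ : ρ.PosDef) (hσ : σ.PosDef)
    (hρtr : ρ.trace = 1) (hσtr : σ.trace = 1)
    (r e : Fin n → ℝ) (hr : Antitone r) (he : Monotone e)
    (V W : Matrix (Fin n) (Fin n) ℂ)
    (hV : V ∈ Matrix.unitaryGroup (Fin n) ℂ)
    (hW : W ∈ Matrix.unitaryGroup (Fin n) ℂ)
    (hVρ : Vᴴ * ρ * V = Matrix.diagonal (fun i => (r i : ℂ)))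
    (hWσ : Wᴴ * σ * W = Matrix.diagonal (fun i => (e i : ℂ))) :
    (∀ U ∈ Matrix.unitaryGroup (Fin n) ℂ,
        ((ρ ^ 2 * (Uᴴ * σ * U)⁻¹).trace).re ≤ ∑ i, r i ^ 2 / e i) ∧
    (ρ ^ 2 * ((W * Vᴴ)ᴴ * σ * (W * Vᴴ))⁻¹).trace = ((∑ i, r i ^ 2 / e i : ℝ) : ℂ) := by
  -- unitarity facts
  have hV1 : Vᴴ * V = 1 := by
    have := Matrix.mem_unitaryGroup_iff'.mp hV; rwa [Matrix.star_eq_conjTranspose] at this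
  have hV2 : V * Vᴴ = 1 := by
    have := Matrix.mem_unitaryGroup_iff.mp hV; rwa [Matrix.star_eq_conjTranspose] at this
  have hW1 : Wᴴ * W = 1 := by
    have := Matrix.mem_unitaryGroup_iff'.mp hW; rwa [Matrix.star_eq_conjTranspose] at this
  have hW2 : W * Wᴴ = 1 := by
    have := Matrix.mem_unitaryGroup_iff.mp hW; rwa [Matrix.star_eq_conjTranspose] at this
  -- cancellation helpers
  have cV1 : ∀ X : Matrix (Fin n) (Fin n) ℂ, Vᴴ * (V * X) = X := fun X => by
    rw [← Matrix.mul_assoc, hV1, Matrix.one_mul]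
  have cV2 : ∀ X : Matrix (Fin n) (Fin n) ℂ, V * (Vᴴ * X) = X := fun X => by
    rw [← Matrix.mul_assoc, hV2, Matrix.one_mul]
  have cW1 : ∀ X : Matrix (Fin n) (Fin n) ℂ, Wᴴ * (W * X) = X := fun X => by
    rw [← Matrix.mul_assoc, hW1, Matrix.one_mul]
  have cW2 : ∀ X : Matrix (Fin n) (Fin n) ℂ, W * (Wᴴ * X) = X := fun X => by
    rw [← Matrix.mul_assoc, hW2, Matrix.one_mul]
  -- positivity of eigenvalues
  have hrpos : ∀ i, 0 < r i := by
    have hpd : (Matrix.diagonal (fun i => (r i : ℂ))).PosDef := by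
      rw [← hVρ]; exact posdef_conj hρ hV1
    intro i
    have := (Matrix.posDef_diagonal_iff.mp hpd) i
    exact_mod_cast this
  have hepos : ∀ i, 0 < e i := by
    have hpd : (Matrix.diagonal (fun i => (e i : ℂ))).PosDef := by
      rw [← hWσ]; exact posdef_conj hσ hW1
    intro i
    have := (Matrix.posDef_diagonal_iff.mp hpd) i
    exact_mod_cast this
  -- reconstructions
  have hρeq : ρ = V * Matrix.diagonal (fun i => (r i : ℂ)) * Vᴴ := by
    rw [← hVρ]
    simp only [Matrix.mul_assoc, cV1, cV2, hV2, Matrix.mul_one]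
  have hσeq : σ = W * Matrix.diagonal (fun i => (e i : ℂ)) * Wᴴ := by
    rw [← hWσ]
    simp only [Matrix.mul_assoc, cW1, cW2, hW2, Matrix.mul_one]
  -- diagonal matrices
  set a : Fin n → ℝ := fun i => r i ^ 2 with ha_def
  set b : Fin n → ℝ := fun i => (e i)⁻¹ with hb_def
  have hρ2 : ρ ^ 2 = V * Matrix.diagonal (fun i => (a i : ℂ)) * Vᴴ := by
    rw [sq, hρeq]
    have hfun : (fun i => (a i : ℂ)) = fun i => (r i : ℂ) * (r i : ℂ) := by
      funext i; rw [ha_def]; push_cast; ring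
    rw [hfun, ← Matrix.diagonal_mul_diagonal]
    simp only [Matrix.mul_assoc, cV1]
  have hbe : Matrix.diagonal (fun i => (b i : ℂ)) * Matrix.diagonal (fun i => (e i : ℂ)) = 1 := by
    rw [Matrix.diagonal_mul_diagonal]
    have h1 : ∀ i : Fin n, (b i : ℂ) * (e i : ℂ) = 1 := fun i => by
      rw [hb_def]
      push_cast
      exact inv_mul_cancel₀ (by exact_mod_cast (hepos i).ne' : (e i : ℂ) ≠ 0)
    simp only [h1, Matrix.diagonal_one]
  have cbe : ∀ X : Matrix (Fin n) (Fin n) ℂ,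
      Matrix.diagonal (fun i => (b i : ℂ)) * (Matrix.diagonal (fun i => (e i : ℂ)) * X) = X :=
    fun X => by rw [← Matrix.mul_assoc, hbe, Matrix.one_mul]
  -- monovary
  have hab : Monovary a b := by
    intro i j hij
    have hji : j ≤ i := by
      by_contra h
      push_neg at h
      have : b j ≤ b i := by
        rw [hb_def]
        exact inv_anti₀ (hepos i) (he h.le)
      exact absurd this (not_le.mpr hij)
    rw [ha_def]
    exact pow_le_pow_left₀ (hrpos i).le (hr hji) 2
  -- sum identity
  have hsum : ∑ i, a i * b i = ∑ i, r i ^ 2 / e i := by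
    refine Finset.sum_congr rfl fun i _ => ?_
    rw [ha_def, hb_def, div_eq_mul_inv]
  have htrc : ∀ Z : Matrix (Fin n) (Fin n) ℂ, (V * Z * Vᴴ).trace = Z.trace := fun Z => by
    rw [Matrix.trace_mul_comm, ← Matrix.mul_assoc, hV1, Matrix.one_mul]
  constructor
  · -- inequality
    intro U hU
    have hU1 : Uᴴ * U = 1 := by
      have := Matrix.mem_unitaryGroup_iff'.mp hU; rwa [Matrix.star_eq_conjTranspose] at this
    have hU2 : U * Uᴴ = 1 := by
      have := Matrix.mem_unitaryGroup_iff.mp hU; rwa [Matrix.star_eq_conjTranspose] at this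
    have cU1 : ∀ X : Matrix (Fin n) (Fin n) ℂ, Uᴴ * (U * X) = X := fun X => by
      rw [← Matrix.mul_assoc, hU1, Matrix.one_mul]
    have cU2 : ∀ X : Matrix (Fin n) (Fin n) ℂ, U * (Uᴴ * X) = X := fun X => by
      rw [← Matrix.mul_assoc, hU2, Matrix.one_mul]
    set M : Matrix (Fin n) (Fin n) ℂ := Vᴴ * (Uᴴ * W) with hM_def
    have hMH : Mᴴ = Wᴴ * (U * V) := by
      rw [hM_def]
      simp only [Matrix.conjTranspose_mul, Matrix.conjTranspose_conjTranspose, Matrix.mul_assoc]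
    have hM1 : M * Mᴴ = 1 := by
      rw [hM_def, hMH]
      simp only [Matrix.mul_assoc, cW2, cU1, hV1]
    have hM2 : Mᴴ * M = 1 := by
      rw [hM_def, hMH]
      simp only [Matrix.mul_assoc, cV2, cU2, hW1]
    have hinv : (Uᴴ * σ * U)⁻¹
        = Uᴴ * W * Matrix.diagonal (fun i => (b i : ℂ)) * Wᴴ * U := by
      apply Matrix.inv_eq_left_inv
      rw [hσeq]
      simp only [Matrix.mul_assoc, cU2, cW1, cbe, cW2, hU1]
    have hid : ρ ^ 2 * (Uᴴ * σ * U)⁻¹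
        = V * (Matrix.diagonal (fun i => (a i : ℂ)) * M * Matrix.diagonal (fun i => (b i : ℂ)) * Mᴴ) * Vᴴ := by
      rw [hρ2, hinv, hM_def, hMH]
      simp only [Matrix.mul_assoc, hV2, Matrix.mul_one]
    rw [hid, htrc, ← hsum]
    exact trace_conj_le a b hab hM1 hM2
  · -- equality at U = W * Vᴴ
    have hXeq : (W * Vᴴ)ᴴ * σ * (W * Vᴴ) = V * Matrix.diagonal (fun i => (e i : ℂ)) * Vᴴ := by
      rw [hσeq]
      simp only [Matrix.conjTranspose_mul, Matrix.conjTranspose_conjTranspose]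
      simp only [Matrix.mul_assoc, cW1]
    have hXinv : ((W * Vᴴ)ᴴ * σ * (W * Vᴴ))⁻¹
        = V * Matrix.diagonal (fun i => (b i : ℂ)) * Vᴴ := by
      apply Matrix.inv_eq_left_inv
      rw [hXeq]
      simp only [Matrix.mul_assoc, cV1, cbe, hV2]
    have hid : ρ ^ 2 * ((W * Vᴴ)ᴴ * σ * (W * Vᴴ))⁻¹
        = V * (Matrix.diagonal (fun i => (a i : ℂ)) * Matrix.diagonal (fun i => (b i : ℂ))) * Vᴴ := by
      rw [hρ2, hXinv]
      simp only [Matrix.mul_assoc, cV1]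
    rw [hid, htrc, Matrix.diagonal_mul_diagonal, Matrix.trace_diagonal, ← hsum]
    push_cast
    rfl
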